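/- (Randomness extraction.) Let (p_i)_{i≥1} be a probability vector with binary digits b_{i,j} ∈ {0,1}, p_i = Σ_{j=1}^∞ b_{i,j} 2^{−j}, and set p_{i,j} = b_{i,j} 2^{−j}. Assume ℰ := Σ_i Σ_j p_{i,j}·log₂(p_i / p_{i,j}) < ∞ (sum over pairs with b_{i,j} = 1). Let (X_ℓ, Y_ℓ)_{ℓ≥1} be i.i.d. pairs of positive-integer random variables with joint law P(X = i, Y = j) = p_{i,j}. For i with p_i > 0 define F_i(0) = 0 and F_i(j) = (1/p_i) Σ_{k=1}^j p_{i,k}, and define recursively U_0⁻ = 0, U_0⁺ = 1, U_ℓ⁻ = U_{ℓ−1}⁻ + (U_{ℓ−1}⁺ − U_{ℓ−1}⁻)·F_{X_ℓ}(Y_ℓ − 1), U_ℓ⁺ = U_{ℓ−1}⁻ + (U_{ℓ−1}⁺ − U_{ℓ−1}⁻)·F_{X_ℓ}(Y_ℓ). Let R_n = max{t ≥ 0 : ⌊2^t U_n⁻⌋ = ⌊2^t U_n⁺⌋}. Then R_n / n → ℰ in probability as n → ∞. -/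

import Mathlib

open MeasureTheory Finset

namespace RE13

noncomputable def F (p : ℕ → ℝ) (b : ℕ → ℕ → ℝ) (i n : ℕ) : ℝ :=
  (1 / p i) * ∑ k ∈ Finset.range n, b i k / 2 ^ (k + 1)

noncomputable def uu (p : ℕ → ℝ) (b : ℕ → ℕ → ℝ) : ℕ → (ℕ → ℕ × ℕ) → ℝ × ℝ
  | 0, _ => (0, 1)
  | n + 1, s =>
    ((uu p b n s).1 + ((uu p b n s).2 - (uu p b n s).1) * F p b (s n).1 (s n).2,
     (uu p b n s).1 + ((uu p b n s).2 - (uu p b n s).1) * F p b (s n).1 ((s n).2 + 1))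

noncomputable def um (p : ℕ → ℝ) (b : ℕ → ℕ → ℝ) (n : ℕ) (s : ℕ → ℕ × ℕ) : ℝ := (uu p b n s).1
noncomputable def up (p : ℕ → ℝ) (b : ℕ → ℕ → ℝ) (n : ℕ) (s : ℕ → ℕ × ℕ) : ℝ := (uu p b n s).2

noncomputable def r (p : ℕ → ℝ) (b : ℕ → ℕ → ℝ) (ij : ℕ × ℕ) : ℝ :=
  F p b ij.1 (ij.2 + 1) - F p b ij.1 ij.2

variable {p : ℕ → ℝ} {b : ℕ → ℕ → ℝ}

@[simp] lemma um_zero (s : ℕ → ℕ × ℕ) : um p b 0 s = 0 := rfl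
@[simp] lemma up_zero (s : ℕ → ℕ × ℕ) : up p b 0 s = 1 := rfl

lemma um_succ (n : ℕ) (s : ℕ → ℕ × ℕ) :
    um p b (n + 1) s = um p b n s + (up p b n s - um p b n s) * F p b (s n).1 (s n).2 := rfl

lemma up_succ (n : ℕ) (s : ℕ → ℕ × ℕ) :
    up p b (n + 1) s = um p b n s + (up p b n s - um p b n s) * F p b (s n).1 ((s n).2 + 1) := rfl

section Basic

variable (hpnn : ∀ i, 0 ≤ p i) (hb : ∀ i j, b i j = 0 ∨ b i j = 1)
  (hexp : ∀ i, p i = ∑' j : ℕ, b i j / 2 ^ (j + 1))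
include hb
set_option linter.unusedSectionVars false

lemma b_nonneg (i j : ℕ) : 0 ≤ b i j := by rcases hb i j with h | h <;> simp [h]

lemma q_nonneg (i j : ℕ) : 0 ≤ b i j / 2 ^ (j + 1) :=
  div_nonneg (b_nonneg hb i j) (by positivity)

lemma q_summable (i : ℕ) : Summable (fun j : ℕ => b i j / 2 ^ (j + 1)) := by
  apply Summable.of_nonneg_of_le (q_nonneg hb i) (fun j => ?_)
    (summable_geometric_two.mul_left (1/2 : ℝ))
  have hb1 : b i j ≤ 1 := by rcases hb i j with h | h <;> simp [h]
  have h2 : (2:ℝ) ^ (j+1) = 2 * 2 ^ j := by ring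
  have : ((1:ℝ)/2) * (1/2) ^ j = 1 / 2 ^ (j+1) := by
    rw [one_div, inv_pow, h2]; ring
  rw [this]
  apply div_le_div_of_nonneg_right hb1 ?_ |>.trans_eq rfl
  · positivity

include hexp in
lemma sum_range_le_p (i n : ℕ) : ∑ k ∈ Finset.range n, b i k / 2 ^ (k + 1) ≤ p i := by
  rw [hexp i]
  exact Summable.sum_le_tsum _ (fun k _ => q_nonneg hb i k) (q_summable hb i)

include hexp in
lemma q_le_p (i j : ℕ) : b i j / 2 ^ (j + 1) ≤ p i := by
  rw [hexp i]
  exact Summable.le_tsum (q_summable hb i) j (fun k _ => q_nonneg hb i k)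

include hpnn in
lemma F_nonneg (i n : ℕ) : 0 ≤ F p b i n :=
  mul_nonneg (one_div_nonneg.2 (hpnn i)) (Finset.sum_nonneg fun k _ => q_nonneg hb i k)

include hpnn in
lemma F_mono (i : ℕ) : Monotone (F p b i) := by
  intro m n hmn
  exact mul_le_mul_of_nonneg_left
    (Finset.sum_le_sum_of_subset_of_nonneg (Finset.range_subset_range.2 hmn)
      (fun k _ _ => q_nonneg hb i k)) (one_div_nonneg.2 (hpnn i))

include hpnn hexp in
lemma F_le_one (i n : ℕ) : F p b i n ≤ 1 := by
  rcases eq_or_lt_of_le (hpnn i) with h | h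
  · simp [F, ← h]
  · rw [F, one_div, inv_mul_le_iff₀ h]
    exact (sum_range_le_p hb hexp i n).trans (by nlinarith)

include hpnn in
lemma r_nonneg (ij : ℕ × ℕ) : 0 ≤ r p b ij :=
  sub_nonneg.2 (F_mono hpnn hb ij.1 (Nat.le_succ _))

omit hb in
lemma len_eq (n : ℕ) (s : ℕ → ℕ × ℕ) :
    up p b n s - um p b n s = ∏ ℓ ∈ Finset.range n, r p b (s ℓ) := by
  induction n with
  | zero => simp
  | succ n ih =>
    rw [Finset.prod_range_succ, ← ih, up_succ, um_succ, r]
    ring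

include hpnn in
lemma um_le_up (n : ℕ) (s : ℕ → ℕ × ℕ) : um p b n s ≤ up p b n s := by
  have h := len_eq (p := p) (b := b) n s
  nlinarith [Finset.prod_nonneg (fun ℓ (_ : ℓ ∈ Finset.range n) => r_nonneg hpnn hb (s ℓ))]

include hpnn in
lemma um_le_um_succ (n : ℕ) (s : ℕ → ℕ × ℕ) : um p b n s ≤ um p b (n + 1) s := by
  rw [um_succ]
  exact le_add_of_nonneg_right (mul_nonneg (sub_nonneg.2 (um_le_up hpnn hb n s))
    (F_nonneg hpnn hb (s n).1 (s n).2))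

include hpnn hexp in
lemma up_succ_le_up (n : ℕ) (s : ℕ → ℕ × ℕ) : up p b (n + 1) s ≤ up p b n s := by
  rw [up_succ]
  nlinarith [mul_nonneg (sub_nonneg.2 (um_le_up hpnn hb n s))
    (sub_nonneg.2 (F_le_one hpnn hb hexp (s n).1 ((s n).2 + 1)))]

include hpnn in
lemma um_mono (s : ℕ → ℕ × ℕ) : Monotone fun n => um p b n s :=
  monotone_nat_of_le_succ fun n => um_le_um_succ hpnn hb n s

include hpnn hexp in
lemma up_anti (s : ℕ → ℕ × ℕ) : Antitone fun n => up p b n s :=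
  antitone_nat_of_succ_le fun n => up_succ_le_up hpnn hb hexp n s

include hpnn in
lemma um_nonneg (n : ℕ) (s : ℕ → ℕ × ℕ) : 0 ≤ um p b n s :=
  le_trans (by simp) (um_mono hpnn hb s (Nat.zero_le n))

include hpnn hexp in
lemma up_le_one (n : ℕ) (s : ℕ → ℕ × ℕ) : up p b n s ≤ 1 :=
  le_trans (up_anti hpnn hb hexp s (Nat.zero_le n)) (by simp)

omit hb in
lemma uu_congr (n : ℕ) {s s' : ℕ → ℕ × ℕ} (h : ∀ ℓ < n, s ℓ = s' ℓ) :
    uu p b n s = uu p b n s' := by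
  induction n with
  | zero => rfl
  | succ n ih =>
    have h1 : uu p b n s = uu p b n s' := ih fun ℓ hℓ => h ℓ (hℓ.trans (Nat.lt_succ_self n))
    show (_, _) = (_, _)
    rw [h1, h n (Nat.lt_succ_self n)]

omit hb in
lemma uu_shift (n : ℕ) (s : ℕ → ℕ × ℕ) :
    um p b (n + 1) s = F p b (s 0).1 (s 0).2 + r p b (s 0) * um p b n (fun k => s (k + 1)) ∧
    up p b (n + 1) s = F p b (s 0).1 (s 0).2 + r p b (s 0) * up p b n (fun k => s (k + 1)) := by
  induction n with
  | zero =>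
    constructor
    · rw [um_succ]; simp
    · rw [up_succ]; simp [r]
  | succ n ih =>
    obtain ⟨ih1, ih2⟩ := ih
    constructor
    · rw [um_succ, ih1, ih2, um_succ]; ring
    · rw [up_succ, ih1, ih2, up_succ]; ring

end Basic

section Disjoint

variable (hpnn : ∀ i, 0 ≤ p i) (hb : ∀ i j, b i j = 0 ∨ b i j = 1)
  (hexp : ∀ i, p i = ∑' j : ℕ, b i j / 2 ^ (j + 1))
include hpnn hb hexp

lemma disjoint_Ioc : ∀ (n : ℕ) (s s' : ℕ → ℕ × ℕ),
    (∀ ℓ < n, (s ℓ).1 = (s' ℓ).1) → (∃ ℓ, ℓ < n ∧ (s ℓ).2 ≠ (s' ℓ).2) →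
    Disjoint (Set.Ioc (um p b n s) (up p b n s)) (Set.Ioc (um p b n s') (up p b n s')) := by
  intro n
  induction n with
  | zero => rintro s s' _ ⟨ℓ, hℓ, _⟩; exact absurd hℓ (Nat.not_lt_zero ℓ)
  | succ n ih =>
    -- auxiliary: the case where the 0-th symbols differ, with `(s 0).2 < (s' 0).2`
    have key : ∀ s s' : ℕ → ℕ × ℕ, (s 0).1 = (s' 0).1 → (s 0).2 < (s' 0).2 →
        Disjoint (Set.Ioc (um p b (n+1) s) (up p b (n+1) s))
          (Set.Ioc (um p b (n+1) s') (up p b (n+1) s')) := by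
      intro s s' hx0 hy0
      have hs1 : Set.Ioc (um p b (n+1) s) (up p b (n+1) s)
          ⊆ Set.Ioc (F p b (s 0).1 (s 0).2) (F p b (s 0).1 ((s 0).2 + 1)) := by
        apply Set.Ioc_subset_Ioc
        · have h1 : um p b 1 s ≤ um p b (n+1) s := um_mono hpnn hb s (Nat.one_le_iff_ne_zero.2 (Nat.succ_ne_zero n))
          have h2 : um p b 1 s = F p b (s 0).1 (s 0).2 := by
            rw [um_succ]; simp
          linarith
        · have h1 : up p b (n+1) s ≤ up p b 1 s := up_anti hpnn hb hexp s (Nat.one_le_iff_ne_zero.2 (Nat.succ_ne_zero n))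
          have h2 : up p b 1 s = F p b (s 0).1 ((s 0).2 + 1) := by
            rw [up_succ]; simp
          linarith
      have hs2 : Set.Ioc (um p b (n+1) s') (up p b (n+1) s')
          ⊆ Set.Ioc (F p b (s' 0).1 (s' 0).2) (F p b (s' 0).1 ((s' 0).2 + 1)) := by
        apply Set.Ioc_subset_Ioc
        · have h1 : um p b 1 s' ≤ um p b (n+1) s' := um_mono hpnn hb s' (Nat.one_le_iff_ne_zero.2 (Nat.succ_ne_zero n))
          have h2 : um p b 1 s' = F p b (s' 0).1 (s' 0).2 := by
            rw [um_succ]; simp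
          linarith
        · have h1 : up p b (n+1) s' ≤ up p b 1 s' := up_anti hpnn hb hexp s' (Nat.one_le_iff_ne_zero.2 (Nat.succ_ne_zero n))
          have h2 : up p b 1 s' = F p b (s' 0).1 ((s' 0).2 + 1) := by
            rw [up_succ]; simp
          linarith
      refine Set.disjoint_of_subset hs1 hs2 ?_
      rw [Set.Ioc_disjoint_Ioc]
      have : F p b (s 0).1 ((s 0).2 + 1) ≤ F p b (s' 0).1 (s' 0).2 := by
        rw [hx0]; exact F_mono hpnn hb (s' 0).1 hy0
      refine le_trans (min_le_left _ _) (this.trans (le_max_right _ _))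
    intro s s' hx hy
    by_cases h0 : (s 0).2 = (s' 0).2
    · -- same first symbol: recurse
      have hs0 : s 0 = s' 0 := Prod.ext (hx 0 (Nat.succ_pos n)) h0
      rcases eq_or_lt_of_le (r_nonneg hpnn hb (s 0)) with hr | hr
      · -- both intervals are empty
        have hlen : up p b (n+1) s - um p b (n+1) s = 0 := by
          rw [len_eq]
          exact Finset.prod_eq_zero (Finset.mem_range.2 (Nat.succ_pos n)) hr.symm
        have hlen' : up p b (n+1) s' - um p b (n+1) s' = 0 := by
          rw [len_eq]
          apply Finset.prod_eq_zero (Finset.mem_range.2 (Nat.succ_pos n))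
          rw [← hs0]; exact hr.symm
        have : Set.Ioc (um p b (n+1) s) (up p b (n+1) s) = ∅ := by
          rw [Set.Ioc_eq_empty_iff]; intro hc; linarith
        rw [this]; exact Set.empty_disjoint _
      · -- r > 0 : use the shift identity
        obtain ⟨hm, hpu⟩ := uu_shift (p := p) (b := b) n s
        obtain ⟨hm', hpu'⟩ := uu_shift (p := p) (b := b) n s'
        rw [Set.disjoint_left]
        intro z hz hz'
        rw [Set.mem_Ioc, hm, hpu] at hz
        rw [Set.mem_Ioc, hm', hpu', ← hs0] at hz'
        set A := F p b (s 0).1 (s 0).2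
        set ρ := r p b (s 0)
        have hzz : (z - A) / ρ ∈ Set.Ioc (um p b n (fun k => s (k+1))) (up p b n (fun k => s (k+1))) := by
          constructor
          · rw [lt_div_iff₀ hr]; nlinarith [hz.1]
          · rw [div_le_iff₀ hr]; nlinarith [hz.2]
        have hzz' : (z - A) / ρ ∈ Set.Ioc (um p b n (fun k => s' (k+1))) (up p b n (fun k => s' (k+1))) := by
          constructor
          · rw [lt_div_iff₀ hr]; nlinarith [hz'.1]
          · rw [div_le_iff₀ hr]; nlinarith [hz'.2]
        obtain ⟨ℓ, hℓ, hne⟩ := hy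
        have hℓ0 : ℓ ≠ 0 := by rintro rfl; exact hne h0
        obtain ⟨k, rfl⟩ := Nat.exists_eq_succ_of_ne_zero hℓ0
        exact Set.disjoint_left.1
          (ih (fun k => s (k+1)) (fun k => s' (k+1))
            (fun m hm => hx (m+1) (Nat.succ_lt_succ hm))
            ⟨k, Nat.lt_of_succ_lt_succ hℓ, hne⟩) hzz hzz'
    · rcases lt_or_gt_of_ne h0 with h | h
      · exact key s s' (hx 0 (Nat.succ_pos n)) h
      · exact (key s' s (hx 0 (Nat.succ_pos n)).symm h).symm

end Disjoint

section Straddle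

/-- basic facts about the canonical grid point witness when floors differ -/
lemma straddle_witness {a c : ℝ} (hab : a ≤ c) (ha : 0 ≤ a) (hc : c ≤ 1) (t : ℕ)
    (h : ⌊(2:ℝ) ^ t * a⌋ ≠ ⌊(2:ℝ) ^ t * c⌋) :
    (2:ℝ) ^ t * a < (⌊(2:ℝ) ^ t * c⌋ : ℝ) ∧ ((⌊(2:ℝ) ^ t * c⌋ : ℝ)) ≤ (2:ℝ) ^ t * c ∧
      1 ≤ ⌊(2:ℝ) ^ t * c⌋ ∧ ⌊(2:ℝ) ^ t * c⌋ ≤ 2 ^ t := by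
  have hpow : (0:ℝ) < 2 ^ t := by positivity
  have hmono : ⌊(2:ℝ) ^ t * a⌋ ≤ ⌊(2:ℝ) ^ t * c⌋ :=
    Int.floor_le_floor (by nlinarith)
  have hlt : ⌊(2:ℝ) ^ t * a⌋ < ⌊(2:ℝ) ^ t * c⌋ := lt_of_le_of_ne hmono h
  have h1 : (2:ℝ) ^ t * a < (⌊(2:ℝ) ^ t * c⌋ : ℝ) := by
    have := Int.lt_floor_add_one ((2:ℝ) ^ t * a)
    have hcast : (⌊(2:ℝ) ^ t * a⌋ : ℝ) + 1 ≤ (⌊(2:ℝ) ^ t * c⌋ : ℝ) := by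
      exact_mod_cast Int.add_one_le_iff.2 hlt
    linarith
  have h2 : ((⌊(2:ℝ) ^ t * c⌋ : ℝ)) ≤ (2:ℝ) ^ t * c := Int.floor_le _
  refine ⟨h1, h2, ?_, ?_⟩
  · have : (0:ℝ) < (⌊(2:ℝ) ^ t * c⌋ : ℝ) := lt_of_le_of_lt (by nlinarith) h1
    exact_mod_cast Int.add_one_le_iff.2 (by exact_mod_cast this : (0:ℤ) < _)
  · have : ((⌊(2:ℝ) ^ t * c⌋ : ℝ)) ≤ ((2 ^ t : ℤ) : ℝ) := by push_cast; nlinarith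
    exact_mod_cast this

end Straddle

section Counting

/-- extend a finite vector of pairs to an infinite sequence -/
def ext (n : ℕ) (v : Fin n → ℕ × ℕ) : ℕ → ℕ × ℕ :=
  fun ℓ => if h : ℓ < n then v ⟨ℓ, h⟩ else (0, 0)

lemma ext_lt {n : ℕ} (v : Fin n → ℕ × ℕ) {ℓ : ℕ} (h : ℓ < n) : ext n v ℓ = v ⟨ℓ, h⟩ :=
  dif_pos h

lemma prod_ext {M : Type*} [CommMonoid M] {n : ℕ} (v : Fin n → ℕ × ℕ) (f : ℕ × ℕ → M) :
    ∏ ℓ ∈ Finset.range n, f (ext n v ℓ) = ∏ ℓ : Fin n, f (v ℓ) := by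
  rw [← Fin.prod_univ_eq_prod_range]
  exact Finset.prod_congr rfl fun ℓ _ => by rw [ext_lt v ℓ.isLt]

variable (hpnn : ∀ i, 0 ≤ p i) (hb : ∀ i j, b i j = 0 ∨ b i j = 1)
  (hexp : ∀ i, p i = ∑' j : ℕ, b i j / 2 ^ (j + 1))
include hpnn hb hexp

/-- for a fixed first-coordinate vector `x`, the set of `y`s whose interval straddles a
level-`t` grid point has at most `2^t` elements -/
lemma bad_finite (n t : ℕ) (x : Fin n → ℕ) :
    ∃ hfin : {y : Fin n → ℕ |
        ⌊(2:ℝ) ^ t * um p b n (ext n (fun ℓ => (x ℓ, y ℓ)))⌋ ≠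
        ⌊(2:ℝ) ^ t * up p b n (ext n (fun ℓ => (x ℓ, y ℓ)))⌋}.Finite,
      hfin.toFinset.card ≤ 2 ^ t := by
  set Bad := {y : Fin n → ℕ |
      ⌊(2:ℝ) ^ t * um p b n (ext n (fun ℓ => (x ℓ, y ℓ)))⌋ ≠
      ⌊(2:ℝ) ^ t * up p b n (ext n (fun ℓ => (x ℓ, y ℓ)))⌋} with hBad
  set m0 : (Fin n → ℕ) → ℤ := fun y => ⌊(2:ℝ) ^ t * up p b n (ext n (fun ℓ => (x ℓ, y ℓ)))⌋ with hm0
  have hw : ∀ y ∈ Bad, ((m0 y : ℝ) / 2 ^ t) ∈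
      Set.Ioc (um p b n (ext n (fun ℓ => (x ℓ, y ℓ)))) (up p b n (ext n (fun ℓ => (x ℓ, y ℓ))))
      ∧ 1 ≤ m0 y ∧ m0 y ≤ 2 ^ t := by
    intro y hy
    obtain ⟨h1, h2, h3, h4⟩ := straddle_witness
      (um_le_up hpnn hb n _) (um_nonneg hpnn hb n _) (up_le_one hpnn hb hexp n _) t hy
    have hpow : (0:ℝ) < 2 ^ t := by positivity
    refine ⟨⟨?_, ?_⟩, h3, h4⟩
    · rw [lt_div_iff₀ hpow]; nlinarith
    · rw [div_le_iff₀ hpow]; nlinarith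
  have hinj : Set.InjOn m0 Bad := by
    intro y hy y' hy' heq
    by_contra hne
    obtain ⟨i, hi⟩ : ∃ i, y i ≠ y' i := by
      by_contra hc; push_neg at hc; exact hne (funext hc)
    have hdisj := disjoint_Ioc hpnn hb hexp n
      (ext n (fun ℓ => (x ℓ, y ℓ))) (ext n (fun ℓ => (x ℓ, y' ℓ)))
      (fun ℓ hℓ => by rw [ext_lt _ hℓ, ext_lt _ hℓ])
      ⟨i.1, i.isLt, by rw [ext_lt _ i.isLt, ext_lt _ i.isLt]; simpa using hi⟩
    have h1 := (hw y hy).1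
    have h2 := (hw y' hy').1
    rw [← heq] at h2
    exact Set.disjoint_left.1 hdisj h1 h2
  have himg : m0 '' Bad ⊆ ↑(Finset.Icc (1:ℤ) (2 ^ t)) := by
    rintro _ ⟨y, hy, rfl⟩
    simp only [Finset.coe_Icc, Set.mem_Icc]
    exact ⟨(hw y hy).2.1, (hw y hy).2.2⟩
  have hfin : Bad.Finite :=
    Set.Finite.of_finite_image ((Finset.Icc (1:ℤ) (2 ^ t)).finite_toSet.subset himg) hinj
  refine ⟨hfin, ?_⟩
  have := Finset.card_le_card_of_injOn m0
    (fun y hy => by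
      apply himg
      exact ⟨y, hfin.mem_toFinset.1 hy, rfl⟩)
    (fun y hy y' hy' => hinj (hfin.mem_toFinset.1 hy) (hfin.mem_toFinset.1 hy'))
  calc hfin.toFinset.card ≤ (Finset.Icc (1:ℤ) (2 ^ t)).card := this
    _ = 2 ^ t := by
        rw [Int.card_Icc]
        norm_num
        have h2 : ((2:ℤ)^t) = ((2^t : ℕ) : ℤ) := by push_cast; ring
        rw [h2, Int.toNat_natCast]

end Counting

section Tsum

open ENNReal

lemma tsum_indicator_finite_le {α : Type*} {S : Set α} (hS : S.Finite) {N : ℕ}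
    (hcard : hS.toFinset.card ≤ N) (C : ℝ≥0∞) :
    ∑' y : α, S.indicator (fun _ => C) y ≤ N * C := by
  rw [tsum_eq_sum (s := hS.toFinset)
    (fun y hy => Set.indicator_of_notMem (fun hmem => hy (hS.mem_toFinset.2 hmem)) _)]
  calc ∑ y ∈ hS.toFinset, S.indicator (fun _ => C) y
      ≤ ∑ _y ∈ hS.toFinset, C :=
        Finset.sum_le_sum fun y _ => Set.indicator_le_self _ _ y
    _ = hS.toFinset.card * C := by rw [Finset.sum_const, nsmul_eq_mul]
    _ ≤ N * C := by
        exact mul_le_mul_left (by exact_mod_cast Nat.cast_le.2 hcard) C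

lemma tsum_pi_prod (n : ℕ) (g : ℕ → ℝ≥0∞) :
    ∑' x : Fin n → ℕ, ∏ ℓ : Fin n, g (x ℓ) = (∑' i : ℕ, g i) ^ n := by
  induction n with
  | zero =>
    rw [tsum_eq_single (fun i => i.elim0) (fun x hx => absurd (Subsingleton.elim x _) hx)]
    simp
  | succ n ih =>
    rw [← (Fin.consEquiv (fun _ : Fin (n+1) => ℕ)).tsum_eq, pow_succ]
    have : ∀ z : ℕ × (Fin n → ℕ),
        ∏ ℓ : Fin (n+1), g ((Fin.consEquiv (fun _ : Fin (n+1) => ℕ)) z ℓ)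
          = g z.1 * ∏ ℓ : Fin n, g (z.2 ℓ) := by
      intro z
      rw [Fin.prod_univ_succ]
      simp [Fin.consEquiv]
    rw [tsum_congr this, ENNReal.tsum_prod']
    have h3 : ∀ a : ℕ, ∑' x : Fin n → ℕ, g a * ∏ ℓ : Fin n, g (x ℓ)
        = g a * ((∑' i : ℕ, g i) ^ n) := by
      intro a; rw [ENNReal.tsum_mul_left, ih]
    rw [tsum_congr h3, ENNReal.tsum_mul_right]
    ring

end Tsum


section QR

variable {p : ℕ → ℝ} {b : ℕ → ℕ → ℝ}

lemma r_eq (p : ℕ → ℝ) (b : ℕ → ℕ → ℝ) (i j : ℕ) :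
    r p b (i, j) = (1 / p i) * (b i j / 2 ^ (j + 1)) := by
  simp only [r, F]
  rw [Finset.sum_range_succ]
  ring

lemma q_eq_p_mul_r (hpnn : ∀ i, 0 ≤ p i) (hb : ∀ i j, b i j = 0 ∨ b i j = 1)
    (hexp : ∀ i, p i = ∑' j : ℕ, b i j / 2 ^ (j + 1)) (i j : ℕ) :
    b i j / 2 ^ (j + 1) = p i * r p b (i, j) := by
  rw [r_eq]
  rcases eq_or_lt_of_le (hpnn i) with h | h
  · have hle : b i j / 2 ^ (j + 1) ≤ p i := q_le_p hb hexp i j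
    rw [← h] at hle
    have hq0 : b i j / 2 ^ (j + 1) = 0 := le_antisymm hle (q_nonneg hb i j)
    rw [hq0, ← h]; ring
  · field_simp

end QR

end RE13

/-- randomness extraction: let `(p_i)` be a probability vector with binary
digits `b i j ∈ {0,1}` (the digit of weight `2^{−(j+1)}`), `p_{i,j} = b i j·2^{−(j+1)}`,
and suppose `ℰ = Σ_{i,j} p_{i,j}·log₂(p_i/p_{i,j})` is finite (summable).  Let
`(X_ℓ, Y_ℓ)_{ℓ≥0}` be i.i.d. with `P(X = i, Y = j) = p_{i,j}`, let
`F_i(n) = (1/p_i)·Σ_{k<n} p_{i,k}`, and define recursively `U₀⁻ = 0`, `U₀⁺ = 1`,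
`U_{ℓ+1}⁻ = U_ℓ⁻ + (U_ℓ⁺ − U_ℓ⁻)·F_{X_ℓ}(Y_ℓ)`,
`U_{ℓ+1}⁺ = U_ℓ⁻ + (U_ℓ⁺ − U_ℓ⁻)·F_{X_ℓ}(Y_ℓ + 1)`
(`Y` is `0`-based: its value `j` denotes the digit of weight `2^{−(j+1)}`).  With
`R_n = max{t ≥ 0 : ⌊2^t U_n⁻⌋ = ⌊2^t U_n⁺⌋}`, one has `R_n/n → ℰ` in probability. -/
theorem randomness_extraction_rate
    {Ω : Type} [MeasurableSpace Ω] (μ : Measure Ω) [IsProbabilityMeasure μ]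
    (p : ℕ → ℝ) (hpnn : ∀ i, 0 ≤ p i) (hpsum : HasSum p 1)
    (b : ℕ → ℕ → ℝ) (hb : ∀ i j, b i j = 0 ∨ b i j = 1)
    (hexp : ∀ i, p i = ∑' j : ℕ, b i j / 2 ^ (j + 1))
    (hE : Summable fun ij : ℕ × ℕ =>
      (b ij.1 ij.2 / 2 ^ (ij.2 + 1)) * Real.logb 2 (p ij.1 / (b ij.1 ij.2 / 2 ^ (ij.2 + 1))))
    (X Y : ℕ → Ω → ℕ)
    (hmeas : ∀ ℓ, Measurable fun ω => (X ℓ ω, Y ℓ ω))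
    (hindep : ProbabilityTheory.iIndepFun
      (fun ℓ ω => (X ℓ ω, Y ℓ ω)) μ)
    (hdist : ∀ ℓ i j, μ {ω | X ℓ ω = i ∧ Y ℓ ω = j} = ENNReal.ofReal (b i j / 2 ^ (j + 1)))
    (Um Up : ℕ → Ω → ℝ)
    (hUm0 : ∀ ω, Um 0 ω = 0) (hUp0 : ∀ ω, Up 0 ω = 1)
    (hUm : ∀ ℓ ω, Um (ℓ + 1) ω
      = Um ℓ ω + (Up ℓ ω - Um ℓ ω)
          * ((1 / p (X ℓ ω)) * ∑ k ∈ Finset.range (Y ℓ ω), b (X ℓ ω) k / 2 ^ (k + 1)))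
    (hUp : ∀ ℓ ω, Up (ℓ + 1) ω
      = Um ℓ ω + (Up ℓ ω - Um ℓ ω)
          * ((1 / p (X ℓ ω)) * ∑ k ∈ Finset.range (Y ℓ ω + 1), b (X ℓ ω) k / 2 ^ (k + 1)))
    (R : ℕ → Ω → ℕ)
    (hR : ∀ n ω, R n ω = sSup {t : ℕ | ⌊(2 : ℝ) ^ t * Um n ω⌋ = ⌊(2 : ℝ) ^ t * Up n ω⌋}) :
    ∀ δ : ℝ, 0 < δ →
      Filter.Tendsto
        (fun n : ℕ => μ {ω | δ <
          |(R n ω : ℝ) / (n : ℝ)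
            - ∑' ij : ℕ × ℕ, (b ij.1 ij.2 / 2 ^ (ij.2 + 1))
                * Real.logb 2 (p ij.1 / (b ij.1 ij.2 / 2 ^ (ij.2 + 1)))|})
        Filter.atTop (nhds 0) := by
  classical
  intro δ hδ
  open RE13 ProbabilityTheory Filter in
  set q : ℕ × ℕ → ℝ := fun ij => b ij.1 ij.2 / 2 ^ (ij.2 + 1) with hqdef
  set f : ℕ × ℕ → ℝ := fun ij =>
    Real.logb 2 (p ij.1 / (b ij.1 ij.2 / 2 ^ (ij.2 + 1))) with hfdef
  set E : ℝ := ∑' ij : ℕ × ℕ, (b ij.1 ij.2 / 2 ^ (ij.2 + 1)) *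
      Real.logb 2 (p ij.1 / (b ij.1 ij.2 / 2 ^ (ij.2 + 1))) with hEdef
  -- basic facts about q and f
  have hqnn : ∀ ij : ℕ × ℕ, 0 ≤ q ij := fun ij => RE13.q_nonneg hb ij.1 ij.2
  have hqle : ∀ ij : ℕ × ℕ, q ij ≤ p ij.1 := fun ij => RE13.q_le_p hb hexp ij.1 ij.2
  have hfnn : ∀ ij : ℕ × ℕ, 0 ≤ f ij := by
    intro ij
    rcases hb ij.1 ij.2 with h | h
    · simp [hfdef, h]
    · have hq : (0:ℝ) < q ij := by
        rw [hqdef]; simp only [h]; positivity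
      apply Real.logb_nonneg one_lt_two
      rw [one_le_div hq]
      exact hqle ij
  have hEnn : 0 ≤ E := by
    rw [hEdef]
    exact tsum_nonneg fun ij => mul_nonneg (hqnn ij) (hfnn ij)
  have hEq : E = ∑' ij : ℕ × ℕ, q ij * f ij := rfl
  -- the deterministic process equals `Um`, `Up`
  have hU : ∀ n ω, Um n ω = RE13.um p b n (fun ℓ => (X ℓ ω, Y ℓ ω)) ∧
      Up n ω = RE13.up p b n (fun ℓ => (X ℓ ω, Y ℓ ω)) := by
    intro n ω
    induction n with
    | zero => exact ⟨by rw [hUm0]; rfl, by rw [hUp0]; rfl⟩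
    | succ n ih =>
      obtain ⟨h1, h2⟩ := ih
      constructor
      · rw [hUm n ω, RE13.um_succ, h1, h2]; rfl
      · rw [hUp n ω, RE13.up_succ, h1, h2]; rfl
  -- the law of the pairs
  have hsing : ∀ ℓ (ij : ℕ × ℕ),
      μ ((fun ω => (X ℓ ω, Y ℓ ω)) ⁻¹' {ij}) = ENNReal.ofReal (q ij) := by
    intro ℓ ij
    have : (fun ω => (X ℓ ω, Y ℓ ω)) ⁻¹' {ij} = {ω | X ℓ ω = ij.1 ∧ Y ℓ ω = ij.2} := by
      ext ω; simp [Prod.ext_iff]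
    rw [this, hdist ℓ ij.1 ij.2]
  have hmap : ∀ ℓ, μ.map (fun ω => (X ℓ ω, Y ℓ ω)) = μ.map (fun ω => (X 0 ω, Y 0 ω)) := by
    intro ℓ
    apply MeasureTheory.Measure.ext_of_singleton
    intro ij
    rw [MeasureTheory.Measure.map_apply (hmeas ℓ) (measurableSet_singleton ij),
      MeasureTheory.Measure.map_apply (hmeas 0) (measurableSet_singleton ij),
      hsing, hsing]
  -- the LLN part
  set W : ℕ → Ω → ℝ := fun ℓ ω => f (X ℓ ω, Y ℓ ω) with hWdef
  have hfmeas : Measurable f := measurable_of_countable f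
  have hWmeas : ∀ ℓ, Measurable (W ℓ) := fun ℓ => hfmeas.comp (hmeas ℓ)
  have hWindep : Pairwise (Function.onFun (ProbabilityTheory.IndepFun · · μ) W) := by
    intro i j hij
    exact (ProbabilityTheory.iIndepFun.indepFun hindep hij).comp hfmeas hfmeas
  have hWident : ∀ ℓ, ProbabilityTheory.IdentDistrib (W ℓ) (W 0) μ μ := by
    intro ℓ
    have hp : ProbabilityTheory.IdentDistrib (fun ω => (X ℓ ω, Y ℓ ω))
        (fun ω => (X 0 ω, Y 0 ω)) μ μ :=
      ⟨(hmeas ℓ).aemeasurable, (hmeas 0).aemeasurable, hmap ℓ⟩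
    exact hp.comp hfmeas
  have hintf : Integrable f (μ.map (fun ω => (X 0 ω, Y 0 ω))) := by
    refine ⟨hfmeas.aestronglyMeasurable, ?_⟩
    show (∫⁻ ij, ‖f ij‖ₑ ∂(μ.map (fun ω => (X 0 ω, Y 0 ω)))) < ⊤
    rw [lintegral_countable']
    have heq : ∀ ij : ℕ × ℕ, ‖f ij‖ₑ * (μ.map (fun ω => (X 0 ω, Y 0 ω))) {ij}
        = ENNReal.ofReal (q ij * f ij) := by
      intro ij
      rw [MeasureTheory.Measure.map_apply (hmeas 0) (measurableSet_singleton ij), hsing,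
        Real.enorm_eq_ofReal (hfnn ij), ← ENNReal.ofReal_mul (hfnn ij), mul_comm]
    rw [tsum_congr heq, ← ENNReal.ofReal_tsum_of_nonneg
      (fun ij => mul_nonneg (hqnn ij) (hfnn ij)) hE]
    exact ENNReal.ofReal_lt_top
  have hWint : Integrable (W 0) μ := by
    have := (integrable_map_measure hfmeas.aestronglyMeasurable (hmeas 0).aemeasurable).1 hintf
    exact this
  have hexpW : ∫ ω, W 0 ω ∂μ = E := by
    rw [hEq]
    rw [show (∫ ω, W 0 ω ∂μ) = ∫ ij, f ij ∂(μ.map (fun ω => (X 0 ω, Y 0 ω))) from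
      (MeasureTheory.integral_map (hmeas 0).aemeasurable hfmeas.aestronglyMeasurable).symm]
    rw [MeasureTheory.integral_countable' hintf]
    apply tsum_congr
    intro ij
    rw [MeasureTheory.measureReal_def, MeasureTheory.Measure.map_apply (hmeas 0) (measurableSet_singleton ij), hsing,
      ENNReal.toReal_ofReal (hqnn ij), smul_eq_mul]
  set Sn : ℕ → Ω → ℝ := fun n ω => (∑ i ∈ Finset.range n, W i ω) / n with hSndef
  have hae : ∀ᵐ ω ∂μ, Filter.Tendsto (fun n => Sn n ω) Filter.atTop (nhds E) := by
    filter_upwards [ProbabilityTheory.strong_law_ae W hWint hWindep hWident] with ω hω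
    rw [hexpW] at hω
    convert hω using 2 with n
    rw [hSndef]
    simp [div_eq_inv_mul]
  have hSnmeas : ∀ n, AEStronglyMeasurable (Sn n) μ := by
    intro n
    exact (Finset.measurable_sum (Finset.range n) (fun i _ => hWmeas i)).div_const _
      |>.aestronglyMeasurable
  have hTIM : MeasureTheory.TendstoInMeasure μ Sn Filter.atTop (fun _ => E) :=
    MeasureTheory.tendstoInMeasure_of_tendsto_ae hSnmeas hae
  -- null event: with probability one, `p (X ℓ) > 0` and `b (X ℓ) (Y ℓ) = 1`
  have hbadnull : ∀ n : ℕ,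
      μ {ω | ∀ ℓ < n, 0 < p (X ℓ ω) ∧ b (X ℓ ω) (Y ℓ ω) = 1}ᶜ = 0 := by
    have h1 : ∀ ℓ : ℕ, μ {ω | ¬ (0 < p (X ℓ ω) ∧ b (X ℓ ω) (Y ℓ ω) = 1)} = 0 := by
      intro ℓ
      set B : Set (ℕ × ℕ) := {ij | ¬ (0 < p ij.1 ∧ b ij.1 ij.2 = 1)} with hBdef
      have hBmeas : MeasurableSet B := (Set.to_countable B).measurableSet
      have hset : {ω | ¬ (0 < p (X ℓ ω) ∧ b (X ℓ ω) (Y ℓ ω) = 1)}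
          = (fun ω => (X ℓ ω, Y ℓ ω)) ⁻¹' B := rfl
      rw [hset]
      have hq0 : ∀ ij ∈ B, ENNReal.ofReal (q ij) = 0 := by
        intro ij hij
        rw [hBdef] at hij
        simp only [Set.mem_setOf_eq, not_and] at hij
        rcases lt_or_eq_of_le (hpnn ij.1) with hp | hp
        · have hb0 : b ij.1 ij.2 = 0 := (hb ij.1 ij.2).resolve_right (hij hp)
          rw [hqdef]; simp [hb0]
        · have h5 := hqle ij
          rw [← hp] at h5
          have : q ij = 0 := le_antisymm h5 (hqnn ij)
          rw [this]; simp
      have hcover : (fun ω => (X ℓ ω, Y ℓ ω)) ⁻¹' B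
          = ⋃ ij ∈ B, (fun ω => (X ℓ ω, Y ℓ ω)) ⁻¹' {ij} := by
        ext ω
        simp only [Set.mem_preimage, Set.mem_iUnion, Set.mem_singleton_iff]
        constructor
        · intro h; exact ⟨_, h, rfl⟩
        · rintro ⟨ij, hij, h⟩; rw [h]; exact hij
      rw [hcover]
      apply measure_biUnion_null_iff (Set.to_countable B) |>.2
      intro ij hij
      rw [hsing ℓ ij]
      exact hq0 ij hij
    intro n
    refine measure_mono_null ?_ (measure_iUnion_null fun ℓ => h1 ℓ)
    intro ω hω
    simp only [Set.mem_compl_iff, Set.mem_setOf_eq, not_forall] at hω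
    obtain ⟨ℓ, _, hℓ2⟩ := hω
    exact Set.mem_iUnion.2 ⟨ℓ, hℓ2⟩
  -- cylinder probabilities
  have hcylset : ∀ (n : ℕ) (v : Fin n → ℕ × ℕ),
      {ω | (fun ℓ : Fin n => (X ℓ.1 ω, Y ℓ.1 ω)) = v}
        = ⋂ ℓ ∈ Finset.range n, (fun ω => (X ℓ ω, Y ℓ ω)) ⁻¹' {RE13.ext n v ℓ} := by
    intro n v
    ext ω
    simp only [Set.mem_setOf_eq, Set.mem_iInter, Set.mem_preimage, Set.mem_singleton_iff,
      Finset.mem_range, funext_iff]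
    constructor
    · intro h ℓ hℓ
      rw [RE13.ext_lt v hℓ]
      exact h ⟨ℓ, hℓ⟩
    · intro h ℓ
      have := h ℓ.1 ℓ.isLt
      rwa [RE13.ext_lt v ℓ.isLt] at this
  have hcylmeas : ∀ (n : ℕ) (v : Fin n → ℕ × ℕ),
      MeasurableSet {ω | (fun ℓ : Fin n => (X ℓ.1 ω, Y ℓ.1 ω)) = v} := by
    intro n v
    rw [hcylset]
    exact Finset.measurableSet_biInter _ fun ℓ _ => (hmeas ℓ) (measurableSet_singleton _)
  have hcyl : ∀ (n : ℕ) (v : Fin n → ℕ × ℕ),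
      μ {ω | (fun ℓ : Fin n => (X ℓ.1 ω, Y ℓ.1 ω)) = v}
        = ∏ ℓ : Fin n, ENNReal.ofReal (q (v ℓ)) := by
    intro n v
    rw [hcylset]
    rw [ProbabilityTheory.iIndepFun.meas_biInter hindep
      (fun ℓ _ => ⟨{RE13.ext n v ℓ}, measurableSet_singleton _, rfl⟩)]
    rw [Finset.prod_congr rfl (fun ℓ _ => hsing ℓ (RE13.ext n v ℓ))]
    exact RE13.prod_ext v fun ij => ENNReal.ofReal (q ij)
  -- probability that the path lies in a given set
  have hpathT : ∀ (n : ℕ) (T : Set (Fin n → ℕ × ℕ)),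
      μ {ω | (fun ℓ : Fin n => (X ℓ.1 ω, Y ℓ.1 ω)) ∈ T}
        = ∑' v : T, ∏ ℓ : Fin n, ENNReal.ofReal (q (v.1 ℓ)) := by
    intro n T
    have hcover : {ω | (fun ℓ : Fin n => (X ℓ.1 ω, Y ℓ.1 ω)) ∈ T}
        = ⋃ v ∈ T, {ω | (fun ℓ : Fin n => (X ℓ.1 ω, Y ℓ.1 ω)) = v} := by
      ext ω
      simp only [Set.mem_setOf_eq, Set.mem_iUnion]
      constructor
      · intro h; exact ⟨_, h, rfl⟩
      · rintro ⟨v, hv, h⟩; rw [h]; exact hv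
    rw [hcover, measure_biUnion (Set.to_countable T) ?_ (fun v _ => hcylmeas n v)]
    · exact tsum_congr fun v => hcyl n v.1
    · intro v hv v' hv' hne
      simp only [Function.onFun]
      rw [Set.disjoint_left]
      intro ω h1 h2
      exact hne (h1.symm.trans h2)
  -- the straddle/small event bound
  have hstraddle : ∀ n t c : ℕ,
      μ {ω | ⌊(2:ℝ) ^ t * Um n ω⌋ ≠ ⌊(2:ℝ) ^ t * Up n ω⌋ ∧
          Up n ω - Um n ω ≤ ((1:ℝ)/2) ^ (t + c)}
        ≤ ENNReal.ofReal (((1:ℝ)/2) ^ c) := by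
    intro n t c
    set ε : ℝ := ((1:ℝ)/2) ^ (t + c) with hεdef
    set T : Set (Fin n → ℕ × ℕ) := {v |
      ⌊(2:ℝ) ^ t * RE13.um p b n (RE13.ext n v)⌋ ≠ ⌊(2:ℝ) ^ t * RE13.up p b n (RE13.ext n v)⌋ ∧
      RE13.up p b n (RE13.ext n v) - RE13.um p b n (RE13.ext n v) ≤ ε} with hTdef
    have hagree : ∀ ω, RE13.uu p b n (RE13.ext n (fun ℓ : Fin n => (X ℓ.1 ω, Y ℓ.1 ω)))
        = RE13.uu p b n (fun ℓ => (X ℓ ω, Y ℓ ω)) :=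
      fun ω => RE13.uu_congr n (fun ℓ hℓ => RE13.ext_lt _ hℓ)
    have e1 : ∀ ω, RE13.um p b n (RE13.ext n (fun ℓ : Fin n => (X ℓ.1 ω, Y ℓ.1 ω)))
        = RE13.um p b n (fun ℓ => (X ℓ ω, Y ℓ ω)) := fun ω => congrArg Prod.fst (hagree ω)
    have e2 : ∀ ω, RE13.up p b n (RE13.ext n (fun ℓ : Fin n => (X ℓ.1 ω, Y ℓ.1 ω)))
        = RE13.up p b n (fun ℓ => (X ℓ ω, Y ℓ ω)) := fun ω => congrArg Prod.snd (hagree ω)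
    have hset : {ω | ⌊(2:ℝ) ^ t * Um n ω⌋ ≠ ⌊(2:ℝ) ^ t * Up n ω⌋ ∧
          Up n ω - Um n ω ≤ ε}
        = {ω | (fun ℓ : Fin n => (X ℓ.1 ω, Y ℓ.1 ω)) ∈ T} := by
      ext ω
      simp only [Set.mem_setOf_eq, hTdef]
      rw [e1 ω, e2 ω, (hU n ω).1, (hU n ω).2]
    rw [hset, hpathT n T]
    -- transform to a sum over (x, y)
    rw [tsum_subtype T (fun v => ∏ ℓ : Fin n, ENNReal.ofReal (q (v ℓ)))]
    rw [← Equiv.tsum_eq (Equiv.arrowProdEquivProdArrow (Fin n) (fun _ => ℕ) (fun _ => ℕ)).symm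
      (fun v => T.indicator (fun v => ∏ ℓ : Fin n, ENNReal.ofReal (q (v ℓ))) v)]
    rw [ENNReal.tsum_prod']
    have hinner : ∀ x : Fin n → ℕ,
        (∑' y : Fin n → ℕ, T.indicator (fun v => ∏ ℓ : Fin n, ENNReal.ofReal (q (v ℓ)))
          ((Equiv.arrowProdEquivProdArrow (Fin n) (fun _ => ℕ) (fun _ => ℕ)).symm (x, y)))
        ≤ ENNReal.ofReal (∏ ℓ : Fin n, p (x ℓ)) * ((2:ENNReal) ^ t * ENNReal.ofReal ε) := by
      intro x
      obtain ⟨hfin, hcard⟩ := RE13.bad_finite hpnn hb hexp n t x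
      set Bad := {y : Fin n → ℕ |
          ⌊(2:ℝ) ^ t * RE13.um p b n (RE13.ext n (fun ℓ => (x ℓ, y ℓ)))⌋ ≠
          ⌊(2:ℝ) ^ t * RE13.up p b n (RE13.ext n (fun ℓ => (x ℓ, y ℓ)))⌋} with hBaddef
      have hpw : ∀ y : Fin n → ℕ,
          T.indicator (fun v => ∏ ℓ : Fin n, ENNReal.ofReal (q (v ℓ)))
            ((Equiv.arrowProdEquivProdArrow (Fin n) (fun _ => ℕ) (fun _ => ℕ)).symm (x, y))
          ≤ Bad.indicator (fun _ => ENNReal.ofReal ((∏ ℓ : Fin n, p (x ℓ)) * ε)) y := by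
        intro y
        have hxy : ((Equiv.arrowProdEquivProdArrow (Fin n) (fun _ => ℕ) (fun _ => ℕ)).symm (x, y))
            = fun ℓ => (x ℓ, y ℓ) := rfl
        rw [hxy]
        by_cases hmem : (fun ℓ : Fin n => (x ℓ, y ℓ)) ∈ T
        · rw [Set.indicator_of_mem hmem]
          have hymem : y ∈ Bad := by
            rw [hBaddef]; exact hmem.1
          rw [Set.indicator_of_mem hymem]
          -- ∏ ofReal (q (x ℓ, y ℓ)) ≤ ofReal (∏ p (x ℓ) * ε)
          rw [← ENNReal.ofReal_prod_of_nonneg (fun ℓ _ => hqnn _)]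
          apply ENNReal.ofReal_le_ofReal
          have hprod : (∏ ℓ : Fin n, q (x ℓ, y ℓ))
              = (∏ ℓ : Fin n, p (x ℓ)) * (RE13.up p b n (RE13.ext n (fun ℓ => (x ℓ, y ℓ)))
                  - RE13.um p b n (RE13.ext n (fun ℓ => (x ℓ, y ℓ)))) := by
            rw [RE13.len_eq, RE13.prod_ext _ (RE13.r p b), ← Finset.prod_mul_distrib]
            exact Finset.prod_congr rfl fun ℓ _ => RE13.q_eq_p_mul_r hpnn hb hexp (x ℓ) (y ℓ)
          rw [hprod]
          apply mul_le_mul_of_nonneg_left hmem.2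
          exact Finset.prod_nonneg fun ℓ _ => hpnn (x ℓ)
        · rw [Set.indicator_of_notMem hmem]
          exact zero_le
      calc (∑' y : Fin n → ℕ, T.indicator (fun v => ∏ ℓ : Fin n, ENNReal.ofReal (q (v ℓ)))
            ((Equiv.arrowProdEquivProdArrow (Fin n) (fun _ => ℕ) (fun _ => ℕ)).symm (x, y)))
          ≤ ∑' y : Fin n → ℕ,
              Bad.indicator (fun _ => ENNReal.ofReal ((∏ ℓ : Fin n, p (x ℓ)) * ε)) y :=
            ENNReal.tsum_le_tsum hpw
        _ ≤ (2 ^ t : ℕ) * ENNReal.ofReal ((∏ ℓ : Fin n, p (x ℓ)) * ε) :=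
            RE13.tsum_indicator_finite_le hfin hcard _
        _ = ENNReal.ofReal (∏ ℓ : Fin n, p (x ℓ)) * ((2:ENNReal) ^ t * ENNReal.ofReal ε) := by
            rw [ENNReal.ofReal_mul (Finset.prod_nonneg fun ℓ _ => hpnn (x ℓ))]
            push_cast
            ring
    calc (∑' x : Fin n → ℕ, ∑' y : Fin n → ℕ,
            T.indicator (fun v => ∏ ℓ : Fin n, ENNReal.ofReal (q (v ℓ)))
              ((Equiv.arrowProdEquivProdArrow (Fin n) (fun _ => ℕ) (fun _ => ℕ)).symm (x, y)))
        ≤ ∑' x : Fin n → ℕ,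
            ENNReal.ofReal (∏ ℓ : Fin n, p (x ℓ)) * ((2:ENNReal) ^ t * ENNReal.ofReal ε) :=
          ENNReal.tsum_le_tsum hinner
      _ = (∑' x : Fin n → ℕ, ENNReal.ofReal (∏ ℓ : Fin n, p (x ℓ)))
            * ((2:ENNReal) ^ t * ENNReal.ofReal ε) := ENNReal.tsum_mul_right
      _ = ENNReal.ofReal (((1:ℝ)/2) ^ c) := by
          have h1 : (∑' x : Fin n → ℕ, ENNReal.ofReal (∏ ℓ : Fin n, p (x ℓ))) = 1 := by
            have h2 : ∀ x : Fin n → ℕ, ENNReal.ofReal (∏ ℓ : Fin n, p (x ℓ))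
                = ∏ ℓ : Fin n, ENNReal.ofReal (p (x ℓ)) :=
              fun x => ENNReal.ofReal_prod_of_nonneg fun ℓ _ => hpnn (x ℓ)
            rw [tsum_congr h2, RE13.tsum_pi_prod n (fun i => ENNReal.ofReal (p i)),
              ← ENNReal.ofReal_tsum_of_nonneg hpnn hpsum.summable, hpsum.tsum_eq]
            simp
          rw [h1, one_mul]
          have h3 : ((2:ENNReal) ^ t) = ENNReal.ofReal ((2:ℝ) ^ t) := by
            rw [ENNReal.ofReal_pow (by norm_num)]
            norm_num
          rw [h3, ← ENNReal.ofReal_mul (by positivity)]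
          congr 1
          rw [hεdef, pow_add, ← mul_assoc, ← mul_pow]
          norm_num
  -- pointwise: on the good event, logb of the interval length is minus the sum of the W's
  have hWsum : ∀ (n : ℕ) (ω : Ω), (∀ ℓ < n, 0 < p (X ℓ ω) ∧ b (X ℓ ω) (Y ℓ ω) = 1) →
      Real.logb 2 (Up n ω - Um n ω) = -∑ i ∈ Finset.range n, W i ω ∧
      0 < Up n ω - Um n ω := by
    intro n ω hω
    have hlen : Up n ω - Um n ω = ∏ ℓ ∈ Finset.range n, RE13.r p b (X ℓ ω, Y ℓ ω) := by
      rw [(hU n ω).1, (hU n ω).2, RE13.len_eq]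
    have hrpos : ∀ ℓ ∈ Finset.range n, 0 < RE13.r p b (X ℓ ω, Y ℓ ω) := by
      intro ℓ hℓ
      obtain ⟨hp, hb1⟩ := hω ℓ (Finset.mem_range.1 hℓ)
      rw [RE13.r_eq]
      have h1 : (0:ℝ) < b (X ℓ ω) (Y ℓ ω) / 2 ^ (Y ℓ ω + 1) := by rw [hb1]; positivity
      have h2 : (0:ℝ) < 1 / p (X ℓ ω) := by positivity
      exact mul_pos h2 h1
    refine ⟨?_, by rw [hlen]; exact Finset.prod_pos hrpos⟩
    rw [hlen, Real.logb_prod _ _ (fun ℓ hℓ => (hrpos ℓ hℓ).ne'), ← Finset.sum_neg_distrib]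
    apply Finset.sum_congr rfl
    intro ℓ hℓ
    obtain ⟨hp, hb1⟩ := hω ℓ (Finset.mem_range.1 hℓ)
    have hq1 : (0:ℝ) < b (X ℓ ω) (Y ℓ ω) / 2 ^ (Y ℓ ω + 1) := by rw [hb1]; positivity
    rw [RE13.r_eq]
    have hinv : (1 / p (X ℓ ω)) * (b (X ℓ ω) (Y ℓ ω) / 2 ^ (Y ℓ ω + 1))
        = (p (X ℓ ω) / (b (X ℓ ω) (Y ℓ ω) / 2 ^ (Y ℓ ω + 1)))⁻¹ := by
      field_simp
    rw [hinv, Real.logb_inv]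
  -- on the good event, membership in the floor set forces `t < Σ W`
  have hkey : ∀ (n : ℕ) (ω : Ω), (∀ ℓ < n, 0 < p (X ℓ ω) ∧ b (X ℓ ω) (Y ℓ ω) = 1) →
      ∀ t : ℕ, ⌊(2:ℝ) ^ t * Um n ω⌋ = ⌊(2:ℝ) ^ t * Up n ω⌋ →
      (t : ℝ) < ∑ i ∈ Finset.range n, W i ω := by
    intro n ω hω t ht
    obtain ⟨hlog, hpos⟩ := hWsum n ω hω
    have h1 : (2:ℝ) ^ t * (Up n ω - Um n ω) < 1 := by
      have f1 : (2:ℝ) ^ t * Up n ω < ⌊(2:ℝ) ^ t * Up n ω⌋ + 1 := Int.lt_floor_add_one _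
      have f2 : (⌊(2:ℝ) ^ t * Um n ω⌋ : ℝ) ≤ 2 ^ t * Um n ω := Int.floor_le _
      rw [← ht] at f1
      nlinarith
    have h2 : Real.logb 2 ((2:ℝ) ^ t * (Up n ω - Um n ω)) < 0 :=
      Real.logb_neg one_lt_two (by positivity) h1
    rw [Real.logb_mul (by positivity) hpos.ne', hlog] at h2
    have h3 : Real.logb 2 ((2:ℝ) ^ t) = t := by
      rw [Real.logb_pow, Real.logb_self_eq_one one_lt_two, mul_one]
    rw [h3] at h2
    linarith
  have hRS : ∀ (n : ℕ) (ω : Ω), (∀ ℓ < n, 0 < p (X ℓ ω) ∧ b (X ℓ ω) (Y ℓ ω) = 1) →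
      BddAbove {t : ℕ | ⌊(2:ℝ) ^ t * Um n ω⌋ = ⌊(2:ℝ) ^ t * Up n ω⌋} := by
    intro n ω hω
    apply Set.Finite.bddAbove
    apply Set.Finite.subset (Set.finite_Iio ⌈∑ i ∈ Finset.range n, W i ω⌉₊)
    intro t ht
    exact Set.mem_Iio.2 (Nat.lt_ceil.2 (hkey n ω hω t ht))
  -- the quantitative bound sequence
  set tn : ℕ → ℕ := fun n => ⌈(n:ℝ) * (E - δ)⌉₊ with htndef
  set cn : ℕ → ℕ := fun n => ⌈(n:ℝ) * (δ/2)⌉₊ with hcndef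
  set Bnd : ℕ → ENNReal := fun n =>
    μ {ω | δ ≤ dist (Sn n ω) E} +
      (ENNReal.ofReal (((1:ℝ)/2) ^ cn n) + μ {ω | δ/4 ≤ dist (Sn n ω) E}) with hBnddef
  have hBnd0 : Filter.Tendsto Bnd Filter.atTop (nhds 0) := by
    have hA := hTIM (ENNReal.ofReal δ) (by simpa using hδ)
    have hB := hTIM (ENNReal.ofReal (δ/4)) (by simpa using (by positivity : (0:ℝ) < δ/4))
    have hcinf : Filter.Tendsto cn Filter.atTop Filter.atTop := by
      rw [← tendsto_natCast_atTop_iff (R := ℝ)]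
      refine Filter.tendsto_atTop_mono (fun n : ℕ => Nat.le_ceil ((n:ℝ) * (δ/2))) ?_
      exact Filter.Tendsto.atTop_mul_const (by positivity) tendsto_natCast_atTop_atTop
    have hC : Filter.Tendsto (fun n => ENNReal.ofReal (((1:ℝ)/2) ^ cn n))
        Filter.atTop (nhds 0) := by
      have h1 : Filter.Tendsto (fun n => ((1:ℝ)/2) ^ cn n) Filter.atTop (nhds 0) :=
        (tendsto_pow_atTop_nhds_zero_of_lt_one
          (by norm_num : (0:ℝ) ≤ 1/2) (by norm_num : (1:ℝ)/2 < 1)).comp hcinf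
      have h2 := ENNReal.tendsto_ofReal h1
      rw [ENNReal.ofReal_zero] at h2
      exact h2
    have hA' : Filter.Tendsto (fun n => μ {ω | δ ≤ dist (Sn n ω) E})
        Filter.atTop (nhds 0) := by
      simpa only [edist_dist, ENNReal.ofReal_le_ofReal_iff dist_nonneg] using hA
    have hB' : Filter.Tendsto (fun n => μ {ω | δ/4 ≤ dist (Sn n ω) E})
        Filter.atTop (nhds 0) := by
      simpa only [edist_dist, ENNReal.ofReal_le_ofReal_iff dist_nonneg] using hB
    have h0 := hA'.add (hC.add hB')
    rw [hBnddef]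
    simpa only [add_zero] using h0
  -- final assembly
  apply tendsto_of_tendsto_of_tendsto_of_le_of_le' tendsto_const_nhds hBnd0
  · exact Filter.Eventually.of_forall fun n => zero_le
  · have hN : ∀ᶠ n : ℕ in Filter.atTop, 8/δ ≤ (n:ℝ) ∧ 1 ≤ n := by
      filter_upwards [Filter.eventually_ge_atTop ⌈8/δ⌉₊, Filter.eventually_ge_atTop 1]
        with n h1 h2
      exact ⟨le_trans (Nat.le_ceil _) (by exact_mod_cast h1), h2⟩
    filter_upwards [hN] with n hn
    obtain ⟨hn8, hn1⟩ := hn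
    have hnpos : (0:ℝ) < (n:ℝ) := by exact_mod_cast hn1
    have hincl : {ω | δ < |(R n ω : ℝ)/(n:ℝ) - E|} ⊆
        {ω | ∀ ℓ < n, 0 < p (X ℓ ω) ∧ b (X ℓ ω) (Y ℓ ω) = 1}ᶜ ∪
        ({ω | δ ≤ dist (Sn n ω) E} ∪
          ({ω | ⌊(2:ℝ) ^ (tn n) * Um n ω⌋ ≠ ⌊(2:ℝ) ^ (tn n) * Up n ω⌋ ∧
              Up n ω - Um n ω ≤ ((1:ℝ)/2) ^ (tn n + cn n)} ∪
            {ω | δ/4 ≤ dist (Sn n ω) E})) := by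
      intro ω hω
      by_cases hg : ∀ ℓ < n, 0 < p (X ℓ ω) ∧ b (X ℓ ω) (Y ℓ ω) = 1
      swap
      · exact Or.inl hg
      right
      simp only [Set.mem_setOf_eq] at hω
      have hSneq : Sn n ω = (∑ i ∈ Finset.range n, W i ω) / n := rfl
      rcases lt_abs.1 hω with hup | hlow
      · -- upper deviation
        left
        have hRpos : 0 < R n ω := by
          by_contra h0
          have hR0 : ((R n ω : ℕ) : ℝ) = 0 := by
            rw [Nat.eq_zero_of_not_pos h0]; simp
          rw [hR0] at hup
          rw [zero_div] at hup
          linarith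
        have hSne : {t : ℕ | ⌊(2:ℝ) ^ t * Um n ω⌋ = ⌊(2:ℝ) ^ t * Up n ω⌋}.Nonempty := by
          by_contra hne
          rw [Set.not_nonempty_iff_eq_empty] at hne
          have : R n ω = 0 := by rw [hR n ω, hne, csSup_empty]; rfl
          omega
        have hRmem : R n ω ∈ {t : ℕ | ⌊(2:ℝ) ^ t * Um n ω⌋ = ⌊(2:ℝ) ^ t * Up n ω⌋} := by
          rw [hR n ω]
          exact Nat.sSup_mem hSne (hRS n ω hg)
        have hltW : (R n ω : ℝ) < ∑ i ∈ Finset.range n, W i ω := hkey n ω hg _ hRmem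
        have h4 : E + δ < Sn n ω := by
          have h4' : (R n ω : ℝ)/(n:ℝ) < (∑ i ∈ Finset.range n, W i ω)/(n:ℝ) := by
            have := mul_lt_mul_of_pos_right hltW (inv_pos.2 hnpos)
            simpa [div_eq_mul_inv] using this
          rw [hSneq]
          linarith
        show δ ≤ dist (Sn n ω) E
        rw [Real.dist_eq]
        have : δ < Sn n ω - E := by linarith
        exact le_of_lt (lt_of_lt_of_le this (le_abs_self _))
      · -- lower deviation
        right
        have hRn : (R n ω : ℝ)/(n:ℝ) < E - δ := by linarith
        have hRnn : (0:ℝ) ≤ (R n ω : ℝ)/(n:ℝ) := by positivity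
        have hEδ : (0:ℝ) < E - δ := lt_of_le_of_lt hRnn hRn
        have hRlt : R n ω < tn n := by
          have h5 : (R n ω : ℝ) < (n:ℝ) * (E - δ) := by
            rw [div_lt_iff₀ hnpos] at hRn
            nlinarith
          have h6 : (n:ℝ) * (E - δ) ≤ (tn n : ℝ) := Nat.le_ceil _
          exact_mod_cast lt_of_lt_of_le h5 h6
        have htnot : ¬ (⌊(2:ℝ) ^ (tn n) * Um n ω⌋ = ⌊(2:ℝ) ^ (tn n) * Up n ω⌋) := by
          intro hmem
          have : tn n ≤ R n ω := by
            rw [hR n ω]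
            exact le_csSup (hRS n ω hg) hmem
          omega
        by_cases hsmall : Up n ω - Um n ω ≤ ((1:ℝ)/2) ^ (tn n + cn n)
        · exact Or.inl ⟨htnot, hsmall⟩
        · right
          push_neg at hsmall
          obtain ⟨hlog, hpos⟩ := hWsum n ω hg
          have h7 : Real.logb 2 (((1:ℝ)/2) ^ (tn n + cn n))
              < Real.logb 2 (Up n ω - Um n ω) :=
            Real.logb_lt_logb one_lt_two (by positivity) hsmall
          have h8 : Real.logb 2 (((1:ℝ)/2) ^ (tn n + cn n)) = -((tn n : ℝ) + (cn n : ℝ)) := by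
            rw [Real.logb_pow]
            have hhalf : Real.logb 2 ((1:ℝ)/2) = -1 := by
              rw [one_div, Real.logb_inv, Real.logb_self_eq_one one_lt_two]
            rw [hhalf]
            push_cast
            ring
          rw [h8, hlog] at h7
          have h9 : (∑ i ∈ Finset.range n, W i ω) < (tn n : ℝ) + (cn n : ℝ) := by linarith
          have h10 : (tn n : ℝ) < (n:ℝ) * (E - δ) + 1 :=
            Nat.ceil_lt_add_one (by positivity)
          have h11 : (cn n : ℝ) < (n:ℝ) * (δ/2) + 1 :=
            Nat.ceil_lt_add_one (by positivity)
          have h14 : (8:ℝ) ≤ (n:ℝ) * δ := by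
            rw [div_le_iff₀ hδ] at hn8
            linarith
          have h12 : Sn n ω < E - δ/4 := by
            rw [hSneq, div_lt_iff₀ hnpos]
            linarith [h9, h10, h11, h14]
          show δ/4 ≤ dist (Sn n ω) E
          rw [Real.dist_eq]
          have h13 : δ/4 < E - Sn n ω := by linarith
          refine le_of_lt (lt_of_lt_of_le h13 ?_)
          rw [abs_sub_comm]
          exact le_abs_self _
    calc μ {ω | δ < |(R n ω : ℝ)/(n:ℝ) - E|}
        ≤ μ ({ω | ∀ ℓ < n, 0 < p (X ℓ ω) ∧ b (X ℓ ω) (Y ℓ ω) = 1}ᶜ ∪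
            ({ω | δ ≤ dist (Sn n ω) E} ∪
              ({ω | ⌊(2:ℝ) ^ (tn n) * Um n ω⌋ ≠ ⌊(2:ℝ) ^ (tn n) * Up n ω⌋ ∧
                  Up n ω - Um n ω ≤ ((1:ℝ)/2) ^ (tn n + cn n)} ∪
                {ω | δ/4 ≤ dist (Sn n ω) E}))) := measure_mono hincl
      _ ≤ μ ({ω | ∀ ℓ < n, 0 < p (X ℓ ω) ∧ b (X ℓ ω) (Y ℓ ω) = 1}ᶜ)
            + (μ {ω | δ ≤ dist (Sn n ω) E} +
              (μ {ω | ⌊(2:ℝ) ^ (tn n) * Um n ω⌋ ≠ ⌊(2:ℝ) ^ (tn n) * Up n ω⌋ ∧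
                  Up n ω - Um n ω ≤ ((1:ℝ)/2) ^ (tn n + cn n)} +
                μ {ω | δ/4 ≤ dist (Sn n ω) E})) := by
          refine le_trans (measure_union_le _ _) ?_
          refine add_le_add_right ?_ _
          refine le_trans (measure_union_le _ _) ?_
          exact add_le_add_right (measure_union_le _ _) _
      _ ≤ Bnd n := by
          rw [hbadnull n, zero_add, hBnddef]
          refine add_le_add_right ?_ _
          exact add_le_add_left (hstraddle n (tn n) (cn n)) _
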